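/- Let G be a subgroup of SL(2,ℂ) that is freely generated by two elements A and B. Then the ℂ-subalgebra of the 2×2 matrix algebra Mat(2,ℂ) generated by G is all of Mat(2,ℂ). -/

import Mathlib

open Matrix

lemma trace_two (M : Matrix (Fin 2) (Fin 2) ℂ) (v : Fin 2 → ℂ) (hdet : M.det = 1)
    (hv : M *ᵥ v = v) (hv0 : v ≠ 0) : M 0 0 + M 1 1 = 2 := by
  have h0 : (M - 1) *ᵥ v = 0 := by
    rw [Matrix.sub_mulVec, Matrix.one_mulVec, hv, sub_self]
  have hdz : (M - 1).det = 0 := by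
    by_contra h
    have h1 := Matrix.nonsing_inv_mul (M - 1) (Ne.isUnit h)
    have hv' : v = 0 := by
      calc v = ((M-1)⁻¹ * (M-1)) *ᵥ v := by rw [h1, Matrix.one_mulVec]
      _ = (M-1)⁻¹ *ᵥ ((M-1) *ᵥ v) := by rw [Matrix.mulVec_mulVec]
      _ = 0 := by rw [h0, Matrix.mulVec_zero]
    exact hv0 hv'
  rw [Matrix.det_fin_two] at hdz hdet
  simp [Matrix.sub_apply, Matrix.one_apply] at hdz
  linear_combination hdet - hdz

lemma commute_of_fix (M N : Matrix (Fin 2) (Fin 2) ℂ) (v : Fin 2 → ℂ)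
    (hM : M.det = 1) (hN : N.det = 1) (hMv : M *ᵥ v = v) (hNv : N *ᵥ v = v)
    (hv0 : v ≠ 0) : M * N = N * M := by
  have trM := trace_two M v hM hMv hv0
  have trN := trace_two N v hN hNv hv0
  have hM0 : M 0 0 * v 0 + M 0 1 * v 1 = v 0 := by
    have := congrFun hMv 0; simpa [Matrix.mulVec, dotProduct, Fin.sum_univ_two] using this
  have hM1 : M 1 0 * v 0 + M 1 1 * v 1 = v 1 := by
    have := congrFun hMv 1; simpa [Matrix.mulVec, dotProduct, Fin.sum_univ_two] using this
  have hN0 : N 0 0 * v 0 + N 0 1 * v 1 = v 0 := by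
    have := congrFun hNv 0; simpa [Matrix.mulVec, dotProduct, Fin.sum_univ_two] using this
  have hN1 : N 1 0 * v 0 + N 1 1 * v 1 = v 1 := by
    have := congrFun hNv 1; simpa [Matrix.mulVec, dotProduct, Fin.sum_univ_two] using this
  set a := M 0 0; set b := M 0 1; set c := M 1 0; set d := M 1 1
  set e := N 0 0; set f := N 0 1; set g := N 1 0; set h := N 1 1
  set x := v 0; set y := v 1
  have hxy : x ≠ 0 ∨ y ≠ 0 := by
    by_contra hcon
    push_neg at hcon
    exact hv0 (funext fun i => by fin_cases i <;> [exact hcon.1; exact hcon.2])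
  ext i j
  fin_cases i <;> fin_cases j <;>
    simp only [Matrix.mul_apply, Fin.sum_univ_two, Fin.mk_zero, Fin.mk_one] <;>
    rcases hxy with hx | hy
  · -- 00, x ≠ 0
    have ha1 : a*x = x - b*y := by linear_combination hM0
    have hc1 : c*x^2 = -(b*y^2) := by linear_combination x*hM1 - x*y*trM + y*hM0
    have hg1 : g*x^2 = -(f*y^2) := by linear_combination x*hN1 - x*y*trN + y*hN0
    apply mul_left_cancel₀ (pow_ne_zero 2 hx)
    linear_combination b*hg1 - f*hc1
  · -- 00, y ≠ 0
    have hB1 : b*y^2 = -(c*x^2) := by linear_combination y*hM0 - x*y*trM + x*hM1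
    have hG1 : f*y^2 = -(g*x^2) := by linear_combination y*hN0 - x*y*trN + x*hN1
    apply mul_left_cancel₀ (pow_ne_zero 2 hy)
    linear_combination g*hB1 - c*hG1
  · -- 01, x ≠ 0
    have ha1 : a*x = x - b*y := by linear_combination hM0
    have hd1 : d*x = x + b*y := by linear_combination x*trM - hM0
    have he1 : e*x = x - f*y := by linear_combination hN0
    have hh1 : h*x = x + f*y := by linear_combination x*trN - hN0
    apply mul_left_cancel₀ hx
    linear_combination f*ha1 + b*hh1 - b*he1 - f*hd1
  · -- 01, y ≠ 0
    have hA1 : d*y = y - c*x := by linear_combination hM1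
    have hD1 : a*y = y + c*x := by linear_combination y*trM - hM1
    have hE1 : h*y = y - g*x := by linear_combination hN1
    have hH1 : e*y = y + g*x := by linear_combination y*trN - hN1
    have hB1 : b*y^2 = -(c*x^2) := by linear_combination y*hM0 - x*y*trM + x*hM1
    have hG1 : f*y^2 = -(g*x^2) := by linear_combination y*hN0 - x*y*trN + x*hN1
    apply mul_left_cancel₀ (pow_ne_zero 3 hy)
    linear_combination (a*y - d*y)*hG1 + (h*y - e*y)*hB1 - g*x^2*hD1 - c*x^2*hE1 + c*x^2*hH1 + g*x^2*hA1
  · -- 10, x ≠ 0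
    have ha1 : a*x = x - b*y := by linear_combination hM0
    have hd1 : d*x = x + b*y := by linear_combination x*trM - hM0
    have he1 : e*x = x - f*y := by linear_combination hN0
    have hh1 : h*x = x + f*y := by linear_combination x*trN - hN0
    have hc1 : c*x^2 = -(b*y^2) := by linear_combination x*hM1 - x*y*trM + y*hM0
    have hg1 : g*x^2 = -(f*y^2) := by linear_combination x*hN1 - x*y*trN + y*hN0
    apply mul_left_cancel₀ (pow_ne_zero 3 hx)
    linear_combination (e*x - h*x)*hc1 + (d*x - a*x)*hg1 - b*y^2*he1 - f*y^2*hd1 + f*y^2*ha1 + b*y^2*hh1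
  · -- 10, y ≠ 0
    have hA1 : d*y = y - c*x := by linear_combination hM1
    have hD1 : a*y = y + c*x := by linear_combination y*trM - hM1
    have hE1 : h*y = y - g*x := by linear_combination hN1
    have hH1 : e*y = y + g*x := by linear_combination y*trN - hN1
    apply mul_left_cancel₀ hy
    linear_combination c*hH1 + g*hA1 - g*hD1 - c*hE1
  · -- 11, x ≠ 0
    have hc1 : c*x^2 = -(b*y^2) := by linear_combination x*hM1 - x*y*trM + y*hM0
    have hg1 : g*x^2 = -(f*y^2) := by linear_combination x*hN1 - x*y*trN + y*hN0
    apply mul_left_cancel₀ (pow_ne_zero 2 hx)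
    linear_combination f*hc1 - b*hg1
  · -- 11, y ≠ 0
    have hB1 : b*y^2 = -(c*x^2) := by linear_combination y*hM0 - x*y*trM + x*hM1
    have hG1 : f*y^2 = -(g*x^2) := by linear_combination y*hN0 - x*y*trN + x*hN1
    apply mul_left_cancel₀ (pow_ne_zero 2 hy)
    linear_combination c*hG1 - g*hB1


abbrev SL2 := Matrix.SpecialLinearGroup (Fin 2) ℂ

-- commuting A,B contradicts freeness
lemma comm_contra (A B : SL2)
    (hfree : Function.Injective (FreeGroup.lift (![A, B]) : FreeGroup (Fin 2) →* SL2))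
    (hAB : (A : Matrix (Fin 2) (Fin 2) ℂ) * B = (B : Matrix (Fin 2) (Fin 2) ℂ) * A) : False := by
  have h : A * B = B * A := Subtype.ext (by push_cast; exact hAB)
  have h2 : FreeGroup.lift (![A, B]) (FreeGroup.of 0 * FreeGroup.of 1)
      = FreeGroup.lift (![A, B]) (FreeGroup.of 1 * FreeGroup.of 0) := by
    simp [h]
  have := hfree h2
  have hne : (FreeGroup.of 0 * FreeGroup.of 1 : FreeGroup (Fin 2)) ≠ FreeGroup.of 1 * FreeGroup.of 0 := by decide
  exact hne this

-- eigen lemma: inverse eigenvector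
lemma inv_eig (P Q : Matrix (Fin 2) (Fin 2) ℂ) (hPQ : P * Q = 1) (v : Fin 2 → ℂ) (c : ℂ)
    (hc : c ≠ 0) (hQ : Q *ᵥ v = c • v) : P *ᵥ v = c⁻¹ • v := by
  have h1 : P *ᵥ (Q *ᵥ v) = v := by rw [Matrix.mulVec_mulVec, hPQ, Matrix.one_mulVec]
  rw [hQ, Matrix.mulVec_smul] at h1
  exact ((inv_smul_eq_iff₀ hc).2 h1.symm).symm

lemma eig_ne (M : Matrix (Fin 2) (Fin 2) ℂ) (hdet : M.det = 1) (v : Fin 2 → ℂ) (hv : v ≠ 0)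
    (c : ℂ) (h : M *ᵥ v = c • v) : c ≠ 0 := by
  rintro rfl
  rw [zero_smul] at h
  apply hv
  calc v = (M⁻¹ * M) *ᵥ v := by rw [Matrix.nonsing_inv_mul M (by simp [hdet]), Matrix.one_mulVec]
  _ = M⁻¹ *ᵥ (M *ᵥ v) := by rw [Matrix.mulVec_mulVec]
  _ = 0 := by rw [h, Matrix.mulVec_zero]

lemma eigvec_contra (A B : SL2)
    (hfree : Function.Injective (FreeGroup.lift (![A, B]) : FreeGroup (Fin 2) →* SL2))
    (v : Fin 2 → ℂ) (hv : v ≠ 0) (a b : ℂ)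
    (hA : (A : Matrix (Fin 2) (Fin 2) ℂ) *ᵥ v = a • v)
    (hB : (B : Matrix (Fin 2) (Fin 2) ℂ) *ᵥ v = b • v) : False := by
  have ha : a ≠ 0 := eig_ne _ (Matrix.SpecialLinearGroup.det_coe A) v hv a hA
  have hb : b ≠ 0 := eig_ne _ (Matrix.SpecialLinearGroup.det_coe B) v hv b hB
  have hAi : ((A⁻¹ : SL2) : Matrix (Fin 2) (Fin 2) ℂ) * A = 1 := by
    rw [← Matrix.SpecialLinearGroup.coe_mul, inv_mul_cancel]
    rfl
  have hBi : ((B⁻¹ : SL2) : Matrix (Fin 2) (Fin 2) ℂ) * B = 1 := by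
    rw [← Matrix.SpecialLinearGroup.coe_mul, inv_mul_cancel]
    rfl
  have hAinv := inv_eig _ _ hAi v a ha hA
  have hBinv := inv_eig _ _ hBi v b hb hB
  set C : SL2 := A * B * A⁻¹ * B⁻¹ with hCdef
  set D : SL2 := A⁻¹ * B * A * B⁻¹ with hDdef
  have hCv : (C : Matrix (Fin 2) (Fin 2) ℂ) *ᵥ v = v := by
    rw [hCdef, Matrix.SpecialLinearGroup.coe_mul, Matrix.SpecialLinearGroup.coe_mul,
      Matrix.SpecialLinearGroup.coe_mul]
    simp only [← Matrix.mulVec_mulVec]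
    rw [hBinv]
    simp only [Matrix.mulVec_smul]
    rw [hAinv]
    simp only [Matrix.mulVec_smul]
    rw [hB]
    simp only [Matrix.mulVec_smul]
    rw [hA, smul_smul, smul_smul, smul_smul]
    rw [show b⁻¹ * a⁻¹ * b * a = 1 by field_simp, one_smul]
  have hDv : (D : Matrix (Fin 2) (Fin 2) ℂ) *ᵥ v = v := by
    rw [hDdef, Matrix.SpecialLinearGroup.coe_mul, Matrix.SpecialLinearGroup.coe_mul,
      Matrix.SpecialLinearGroup.coe_mul]
    simp only [← Matrix.mulVec_mulVec]
    rw [hBinv]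
    simp only [Matrix.mulVec_smul]
    rw [hA]
    simp only [Matrix.mulVec_smul]
    rw [hB]
    simp only [Matrix.mulVec_smul]
    rw [hAinv, smul_smul, smul_smul, smul_smul]
    rw [show b⁻¹ * a * b * a⁻¹ = 1 by field_simp, one_smul]
  have hcomm : (C : Matrix (Fin 2) (Fin 2) ℂ) * D = (D : Matrix (Fin 2) (Fin 2) ℂ) * C :=
    commute_of_fix _ _ v (Matrix.SpecialLinearGroup.det_coe C)
      (Matrix.SpecialLinearGroup.det_coe D) hCv hDv hv
  have hCD : C * D = D * C := Subtype.ext (by push_cast; exact hcomm)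
  set w1 : FreeGroup (Fin 2) := FreeGroup.of 0 * FreeGroup.of 1 * (FreeGroup.of 0)⁻¹ * (FreeGroup.of 1)⁻¹
  set w2 : FreeGroup (Fin 2) := (FreeGroup.of 0)⁻¹ * FreeGroup.of 1 * FreeGroup.of 0 * (FreeGroup.of 1)⁻¹
  have hl1 : FreeGroup.lift (![A, B]) w1 = C := by simp [w1, hCdef]
  have hl2 : FreeGroup.lift (![A, B]) w2 = D := by simp [w2, hDdef]
  have h2 : FreeGroup.lift (![A, B]) (w1 * w2) = FreeGroup.lift (![A, B]) (w2 * w1) := by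
    simp [hl1, hl2, hCD]
  have := hfree h2
  have hne : w1 * w2 ≠ w2 * w1 := by decide
  exact hne this

-- 2x2 Cayley-Hamilton
lemma ch2 (M : Matrix (Fin 2) (Fin 2) ℂ) : M * M = M.trace • M - M.det • 1 := by
  ext i j
  fin_cases i <;> fin_cases j <;>
    simp [Matrix.mul_apply, Fin.sum_univ_two, Matrix.trace_fin_two, Matrix.det_fin_two,
      Matrix.one_apply] <;> ring

theorem stmt_6 (A B : Matrix.SpecialLinearGroup (Fin 2) ℂ)
    (G : Subgroup (Matrix.SpecialLinearGroup (Fin 2) ℂ))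
    (hG : G = Subgroup.closure {A, B})
    (hfree : Function.Injective
      (FreeGroup.lift (![A, B]) : FreeGroup (Fin 2) →* Matrix.SpecialLinearGroup (Fin 2) ℂ)) :
    Algebra.adjoin ℂ
        ((fun g : Matrix.SpecialLinearGroup (Fin 2) ℂ => (g : Matrix (Fin 2) (Fin 2) ℂ)) ''
          (G : Set (Matrix.SpecialLinearGroup (Fin 2) ℂ))) = ⊤ := by
  set S := Algebra.adjoin ℂ
      ((fun g : Matrix.SpecialLinearGroup (Fin 2) ℂ => (g : Matrix (Fin 2) (Fin 2) ℂ)) ''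
        (G : Set (Matrix.SpecialLinearGroup (Fin 2) ℂ))) with hS
  have hAG : A ∈ G := by
    rw [hG]; exact Subgroup.subset_closure (by simp)
  have hBG : B ∈ G := by
    rw [hG]; exact Subgroup.subset_closure (by simp)
  have hmem : ∀ g : SL2, g ∈ G → (g : Matrix (Fin 2) (Fin 2) ℂ) ∈ S :=
    fun g hg => Algebra.subset_adjoin ⟨g, hg, rfl⟩
  have hAS : (A : Matrix (Fin 2) (Fin 2) ℂ) ∈ S := hmem A hAG
  have hBS : (B : Matrix (Fin 2) (Fin 2) ℂ) ∈ S := hmem B hBG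
  have hABS : (A : Matrix (Fin 2) (Fin 2) ℂ) * B ∈ S := by
    have := hmem (A * B) (mul_mem hAG hBG)
    rwa [Matrix.SpecialLinearGroup.coe_mul] at this
  -- linear independence
  have hli : LinearIndependent ℂ
      ![(1 : Matrix (Fin 2) (Fin 2) ℂ), A, B, (A : Matrix (Fin 2) (Fin 2) ℂ) * B] := by
    by_contra hdep
    rw [Fintype.not_linearIndependent_iff] at hdep
    obtain ⟨k, hsum, hex⟩ := hdep
    rw [Fin.sum_univ_four] at hsum
    simp only [Matrix.cons_val_zero, Matrix.cons_val_one, Matrix.head_cons, Matrix.cons_val_two, Matrix.cons_val_three, Matrix.tail_cons] at hsum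
    set α := k 0; set β := k 1; set γ := k 2; set δ := k 3
    -- helper: A (or B) scalar or commuting cases all give False
    have hcomm : ¬ ((A : Matrix (Fin 2) (Fin 2) ℂ) * B = (B : Matrix (Fin 2) (Fin 2) ℂ) * A) :=
      comm_contra A B hfree
    by_cases hδ : δ = 0
    · -- relation among 1, A, B
      rw [hδ, zero_smul, add_zero] at hsum
      by_cases hγ : γ = 0
      · rw [hγ, zero_smul, add_zero] at hsum
        by_cases hβ : β = 0
        · rw [hβ, zero_smul, add_zero] at hsum
          have hα : α = 0 := by
            have := congrFun (congrFun hsum 0) 0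
            simpa using this
          rcases hex with ⟨i, hi⟩
          fin_cases i <;> simp_all <;> exact hi (by assumption)
        · -- A is scalar
          apply hcomm
          have hA : (A : Matrix (Fin 2) (Fin 2) ℂ) = (-α/β) • 1 := by
            have : β • (A : Matrix (Fin 2) (Fin 2) ℂ) = -α • 1 := by
              rw [← sub_eq_zero]; rw [← hsum]; module
            calc (A : Matrix (Fin 2) (Fin 2) ℂ) = β⁻¹ • (β • (A : Matrix (Fin 2) (Fin 2) ℂ)) := by
                  rw [smul_smul, inv_mul_cancel₀ hβ, one_smul]
            _ = (-α/β) • 1 := by rw [this, smul_smul]; congr 1; field_simp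
          rw [hA]
          simp [Matrix.smul_mul, Matrix.mul_smul]
      · -- B = scalar combination of 1, A
        apply hcomm
        have hrel : γ • ((A : Matrix (Fin 2) (Fin 2) ℂ) * B)
            = γ • ((B : Matrix (Fin 2) (Fin 2) ℂ) * A) := by
          have h1 : γ • (B : Matrix (Fin 2) (Fin 2) ℂ) = -(α • 1) - β • A := by
            rw [← sub_eq_zero, ← hsum]; module
          calc γ • ((A : Matrix (Fin 2) (Fin 2) ℂ) * B)
              = (A : Matrix (Fin 2) (Fin 2) ℂ) * (γ • (B : Matrix (Fin 2) (Fin 2) ℂ)) := by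
                rw [Matrix.mul_smul]
          _ = (A : Matrix (Fin 2) (Fin 2) ℂ) * (-(α • 1) - β • A) := by rw [h1]
          _ = (-(α • 1) - β • (A : Matrix (Fin 2) (Fin 2) ℂ)) * A := by
                simp [Matrix.mul_sub, Matrix.sub_mul, Matrix.mul_smul, Matrix.smul_mul,
                  Matrix.mul_one, Matrix.one_mul, mul_assoc]
          _ = (γ • (B : Matrix (Fin 2) (Fin 2) ℂ)) * A := by rw [h1]
          _ = γ • ((B : Matrix (Fin 2) (Fin 2) ℂ) * A) := by rw [Matrix.smul_mul]
        exact smul_right_injective _ hγ hrel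
    · -- δ ≠ 0
      set A' : Matrix (Fin 2) (Fin 2) ℂ := (A : Matrix (Fin 2) (Fin 2) ℂ) + (γ/δ) • 1 with hA'def
      set B' : Matrix (Fin 2) (Fin 2) ℂ := (B : Matrix (Fin 2) (Fin 2) ℂ) + (β/δ) • 1 with hB'def
      set c : ℂ := (β*γ)/δ^2 - α/δ with hcdef
      have hkey : A' * B' = c • 1 := by
        have h1 : (A : Matrix (Fin 2) (Fin 2) ℂ) * B
            = δ⁻¹ • (-(α • 1) - β • A - γ • B) := by
          rw [eq_inv_smul_iff₀ hδ, ← sub_eq_zero, ← hsum]; module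
        rw [hA'def, hB'def, Matrix.add_mul, Matrix.mul_add, Matrix.mul_add, h1, hcdef]
        simp only [Matrix.smul_mul, Matrix.mul_smul, Matrix.one_mul, Matrix.mul_one, smul_smul]
        module
      by_cases hc : c = 0
      · -- A' B' = 0
        rw [hc, zero_smul] at hkey
        by_cases hB'0 : B' = 0
        · -- B scalar
          apply hcomm
          have hB : (B : Matrix (Fin 2) (Fin 2) ℂ) = (-(β/δ)) • 1 := by
            have := hB'0
            rw [hB'def] at this
            rw [← sub_eq_zero, ← this]; module
          rw [hB]
          simp [Matrix.smul_mul, Matrix.mul_smul]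
        · by_cases hdB' : B'.det = 0
          · -- rank one case: common eigenvector
            obtain ⟨i, j, hij⟩ : ∃ i j, B' i j ≠ 0 := by
              by_contra hz
              push_neg at hz
              exact hB'0 (Matrix.ext fun i j => hz i j)
            set u : Fin 2 → ℂ := Pi.single j 1 with hudef
            set v : Fin 2 → ℂ := B' *ᵥ u with hvdef
            have hv0 : v ≠ 0 := by
              intro hv
              apply hij
              have := congrFun hv i
              simpa [hvdef, hudef, Matrix.mulVec, dotProduct, Pi.single_apply,
                Fin.sum_univ_two] using this
            have hAv : (A : Matrix (Fin 2) (Fin 2) ℂ) *ᵥ v = (-(γ/δ)) • v := by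
              have h1 : A' *ᵥ v = 0 := by
                rw [hvdef, Matrix.mulVec_mulVec, hkey, Matrix.zero_mulVec]
              rw [hA'def] at h1
              rw [Matrix.add_mulVec, Matrix.smul_mulVec, Matrix.one_mulVec,
                add_eq_zero_iff_eq_neg] at h1
              rw [h1, neg_smul]
            have hBv : (B : Matrix (Fin 2) (Fin 2) ℂ) *ᵥ v = (B'.trace - β/δ) • v := by
              have h1 : B' *ᵥ v = B'.trace • v := by
                rw [hvdef, Matrix.mulVec_mulVec, ch2, hdB']
                simp [Matrix.sub_mulVec, Matrix.smul_mulVec]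
              rw [hB'def] at h1
              rw [Matrix.add_mulVec, Matrix.smul_mulVec, Matrix.one_mulVec] at h1
              have : (B : Matrix (Fin 2) (Fin 2) ℂ) *ᵥ v = B'.trace • v - (β/δ) • v := by
                rw [← h1]; module
              rw [this, sub_smul]
            exact eigvec_contra A B hfree v hv0 _ _ hAv hBv
          · -- B' invertible, so A' = 0, A scalar
            apply hcomm
            have hA'0 : A' = 0 := by
              have h2 := Matrix.nonsing_inv_mul B' (Ne.isUnit hdB')
              calc A' = A' * (B' * B'⁻¹) := by
                    rw [Matrix.mul_nonsing_inv B' (Ne.isUnit hdB'), Matrix.mul_one]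
              _ = (A' * B') * B'⁻¹ := by rw [Matrix.mul_assoc]
              _ = 0 := by rw [hkey, Matrix.zero_mul]
            have hA : (A : Matrix (Fin 2) (Fin 2) ℂ) = (-(γ/δ)) • 1 := by
              rw [hA'def] at hA'0
              rw [← sub_eq_zero, ← hA'0]; module
            rw [hA]
            simp [Matrix.smul_mul, Matrix.mul_smul]
      · -- c ≠ 0 : A', B' invertible and commute
        apply hcomm
        have h1 : A' * (c⁻¹ • B') = 1 := by
          rw [Matrix.mul_smul, hkey, smul_smul, inv_mul_cancel₀ hc, one_smul]
        have h2 : (c⁻¹ • B') * A' = 1 := mul_eq_one_comm.mp h1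
        have h3 : B' * A' = c • 1 := by
          calc B' * A' = c • ((c⁻¹ • B') * A') := by
                rw [Matrix.smul_mul, smul_smul, mul_inv_cancel₀ hc, one_smul]
          _ = c • 1 := by rw [h2]
        rw [← sub_eq_zero]
        calc (A : Matrix (Fin 2) (Fin 2) ℂ) * B - (B : Matrix (Fin 2) (Fin 2) ℂ) * A
            = A' * B' - B' * A' := by
              rw [hA'def, hB'def]
              simp only [Matrix.add_mul, Matrix.mul_add, Matrix.smul_mul, Matrix.mul_smul,
                Matrix.one_mul, Matrix.mul_one, smul_smul]
              module
        _ = 0 := by rw [hkey, h3, sub_self]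
  -- span argument
  have hspan : Submodule.span ℂ (Set.range
      ![(1 : Matrix (Fin 2) (Fin 2) ℂ), A, B, (A : Matrix (Fin 2) (Fin 2) ℂ) * B]) = ⊤ :=
    hli.span_eq_top_of_card_eq_finrank (by simp [Module.finrank_matrix])
  apply Subalgebra.toSubmodule_injective
  rw [Algebra.top_toSubmodule, eq_top_iff, ← hspan]
  apply Submodule.span_le.2
  rintro z ⟨i, rfl⟩
  fin_cases i
  · exact one_mem S
  · exact hAS
  · exact hBS
  · exact hABS
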